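/- For every I ≥ 1 there exist constants C_I > 0 and ε_I > 0 such that for every ε ∈ (0, ε_I] and every ω ∈ (L^∞ ∩ L^1)(ℝ²) with |ω| ≤ 1 a.e. and ‖ω‖_{L¹} ≤ I, the Biot–Savart velocity u of ω satisfies u₁(−ε,0) − u₁(ε,0) ≤ (4/π) ε |ln ε| + C_I ε. -/

import Mathlib

open MeasureTheory Real Filter Set intervalIntegral

noncomputable section
/-- The Biot–Savart velocity of a vorticity `ω ∈ (L^∞ ∩ L¹)(ℝ²)`:
`u(x) = (1/(2π)) ∫_{ℝ²} ((x₂ − y₂, y₁ − x₁)/|x − y|²) ω(y) dy`. -/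
def biotSavart (ω : ℝ × ℝ → ℝ) (x : ℝ × ℝ) : ℝ × ℝ :=
  ((1 / (2 * π)) * ∫ y : ℝ × ℝ, ((x.2 - y.2) / ((x.1 - y.1) ^ 2 + (x.2 - y.2) ^ 2)) * ω y,
   (1 / (2 * π)) * ∫ y : ℝ × ℝ, ((y.1 - x.1) / ((x.1 - y.1) ^ 2 + (x.2 - y.2) ^ 2)) * ω y)

namespace BS


/-- `s x = |x|^(-1/2)` -/
def s (x : ℝ) : ℝ := (Real.sqrt |x|)⁻¹

lemma s_nonneg (x : ℝ) : 0 ≤ s x := by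
  rw [s]; positivity

lemma s_even (x : ℝ) : s (-x) = s x := by simp [s]

lemma s_eq_rpow {x : ℝ} (hx : 0 ≤ x) : s x = x ^ (-(1/2 : ℝ)) := by
  rw [s, abs_of_nonneg hx, Real.rpow_neg hx, Real.sqrt_eq_rpow]

lemma II_s_pos (c : ℝ) : IntervalIntegrable s volume 0 c := by
  rcases le_or_gt 0 c with hc | hc
  · have h : IntervalIntegrable (fun x : ℝ => x ^ (-(1/2 : ℝ))) volume 0 c :=
      intervalIntegrable_rpow' (by norm_num)
    rw [intervalIntegrable_iff_integrableOn_Ioc_of_le hc] at h ⊢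
    exact h.congr_fun (fun x hx => (s_eq_rpow hx.1.le).symm) measurableSet_Ioc
  · -- c < 0 : use comp_neg
    have h : IntervalIntegrable s volume 0 (-c) := by
      have h : IntervalIntegrable (fun x : ℝ => x ^ (-(1/2 : ℝ))) volume 0 (-c) :=
        intervalIntegrable_rpow' (by norm_num)
      rw [intervalIntegrable_iff_integrableOn_Ioc_of_le (by linarith)] at h ⊢
      exact h.congr_fun (fun x hx => (s_eq_rpow hx.1.le).symm) measurableSet_Ioc
    have := (IntervalIntegrable.iff_comp_neg).mp h
    have h2 : IntervalIntegrable (fun x => s x) volume c 0 := by simpa [s_even] using this.symm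
    exact h2.symm

lemma II_s (a b : ℝ) : IntervalIntegrable s volume a b := by
  have ha : IntervalIntegrable s volume a 0 := (II_s_pos a).symm
  exact ha.trans (II_s_pos b)

lemma int_s_pos (c : ℝ) (hc : 0 ≤ c) : ∫ x in (0:ℝ)..c, s x = 2 * Real.sqrt c := by
  have h1 : ∫ x in (0:ℝ)..c, s x = ∫ x in (0:ℝ)..c, x ^ (-(1/2 : ℝ)) := by
    apply intervalIntegral.integral_congr
    intro x hx
    rw [uIcc_of_le hc] at hx
    exact s_eq_rpow hx.1
  rw [h1, integral_rpow (Or.inl (by norm_num))]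
  rw [Real.zero_rpow (by norm_num), Real.sqrt_eq_rpow]
  norm_num
  ring

lemma int_s_neg (c : ℝ) (hc : 0 ≤ c) : ∫ x in (-c)..(0:ℝ), s x = 2 * Real.sqrt c := by
  have := intervalIntegral.integral_comp_neg (a := (0:ℝ)) (b := c) (f := s)
  simp only [s_even, neg_zero] at this
  rw [← this, int_s_pos c hc]

lemma int_s (a b : ℝ) (ha : 0 ≤ a) (hb : 0 ≤ b) :
    ∫ x in (-a)..b, s x = 2 * Real.sqrt a + 2 * Real.sqrt b := by
  rw [← intervalIntegral.integral_add_adjacent_intervals (II_s (-a) 0) (II_s 0 b),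
    int_s_pos b hb, int_s_neg a ha]


lemma even_II {f : ℝ → ℝ} (hf : ∀ x, f (-x) = f x) {c : ℝ}
    (h : IntervalIntegrable f volume 0 c) : IntervalIntegrable f volume (-c) 0 := by
  have := (IntervalIntegrable.iff_comp_neg).mp h
  simp only [hf, neg_zero] at this
  exact this.symm

lemma even_int {f : ℝ → ℝ} (hf : ∀ x, f (-x) = f x) {c : ℝ}
    (h : IntervalIntegrable f volume 0 c) :
    ∫ x in (-c)..c, f x = 2 * ∫ x in (0:ℝ)..c, f x := by
  have h1 : ∫ x in (-c)..(0:ℝ), f x = ∫ x in (0:ℝ)..c, f x := by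
    have := intervalIntegral.integral_comp_neg (a := (0:ℝ)) (b := c) (f := f)
    simp only [hf, neg_zero] at this
    rw [this]
  rw [← intervalIntegral.integral_add_adjacent_intervals (even_II hf h) h, h1]
  ring

/-- the two-sided set `T a b = (a,b] ∪ [-b,-a)` reflected; we use `Ioc a b ∪ Ioc (-b) (-a)`. -/
def T (a b : ℝ) : Set ℝ := Ioc a b ∪ Ioc (-b) (-a)

lemma T_measurable (a b : ℝ) : MeasurableSet (T a b) :=
  measurableSet_Ioc.union measurableSet_Ioc

lemma mem_T {a b x : ℝ} (h : 0 ≤ a) (hx : x ∈ T a b) : a ≤ |x| ∧ |x| ≤ b := by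
  rcases hx with hx | hx
  · rw [abs_of_pos (lt_of_le_of_lt h hx.1)]; exact ⟨hx.1.le, hx.2⟩
  · have hx2 : x ≤ 0 := le_trans hx.2 (by linarith)
    rw [abs_of_nonpos hx2]
    constructor <;> linarith [hx.1, hx.2]

lemma int_T {f : ℝ → ℝ} (hf : ∀ x, f (-x) = f x) {a b : ℝ} (h0 : 0 ≤ a) (hab : a ≤ b)
    (h : IntervalIntegrable f volume a b) :
    ∫ x in T a b, f x = 2 * ∫ x in a..b, f x := by
  have hd : Disjoint (Ioc a b) (Ioc (-b) (-a)) := by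
    apply Set.disjoint_left.mpr
    rintro x ⟨hx1, _⟩ ⟨_, hx4⟩
    linarith
  have hIoc : IntegrableOn f (Ioc a b) volume := by
    rwa [← intervalIntegrable_iff_integrableOn_Ioc_of_le hab]
  have hneg : IntervalIntegrable f volume (-b) (-a) := by
    have := (IntervalIntegrable.iff_comp_neg).mp h
    simp only [hf] at this
    exact this.symm
  have hIoc2 : IntegrableOn f (Ioc (-b) (-a)) volume := by
    rwa [← intervalIntegrable_iff_integrableOn_Ioc_of_le (by linarith)]
  rw [T, setIntegral_union hd measurableSet_Ioc hIoc hIoc2]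
  rw [← intervalIntegral.integral_of_le hab, ← intervalIntegral.integral_of_le (by linarith : -b ≤ -a)]
  have h1 : ∫ x in (-b)..(-a), f x = ∫ x in a..b, f x := by
    have := intervalIntegral.integral_comp_neg (a := a) (b := b) (f := f)
    simp only [hf] at this
    rw [this]
  rw [h1]; ring

lemma int_inner_pos {c : ℝ} (hc : 0 < c) :
    ∫ y in (0:ℝ)..2, |y| / (c + y^2)^2 = 1/(2*c) - 1/(2*(c+4)) := by
  have hcong : ∫ y in (0:ℝ)..2, |y| / (c + y^2)^2 = ∫ y in (0:ℝ)..2, y / (c + y^2)^2 := by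
    apply intervalIntegral.integral_congr
    intro x hx
    rw [uIcc_of_le (by norm_num : (0:ℝ) ≤ 2)] at hx
    dsimp only
    rw [abs_of_nonneg hx.1]
  rw [hcong]
  have hd : ∀ y ∈ uIcc (0:ℝ) 2, HasDerivAt (fun y : ℝ => -(1/(2*(c + y^2))))
      (y / (c + y^2)^2) y := by
    intro y _
    have h1 : HasDerivAt (fun y : ℝ => c + y^2) (2*y) y := by
      simpa using ((hasDerivAt_pow 2 y).const_add c)
    have hne : c + y^2 ≠ 0 := by positivity
    have h2 := (h1.inv hne).const_mul (-(1/2 : ℝ))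
    have hfun : (fun y : ℝ => -(1/(2*(c+y^2)))) = fun y : ℝ => -(1/2 : ℝ) * (c+y^2)⁻¹ := by
      funext t
      field_simp
    rw [hfun]
    refine h2.congr_deriv ?_
    field_simp
    try ring
  rw [intervalIntegral.integral_eq_sub_of_hasDerivAt hd]
  · have hne : c + (2:ℝ)^2 ≠ 0 := by positivity
    have hne0 : c + (0:ℝ)^2 ≠ 0 := by positivity
    have h4 : c + (2:ℝ)^2 = c + 4 := by ring
    norm_num
    ring
  · apply Continuous.intervalIntegrable
    apply Continuous.div (by fun_prop) (by fun_prop)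
    intro y; positivity

lemma int_inner {c : ℝ} (hc : 0 < c) :
    ∫ y in (-2:ℝ)..2, |y| / (c + y^2)^2 ≤ 1/c := by
  have heven : ∀ y : ℝ, |(-y)| / (c + (-y)^2)^2 = |y| / (c + y^2)^2 := by
    intro y; rw [abs_neg, neg_pow]; ring_nf
  have hII : IntervalIntegrable (fun y : ℝ => |y| / (c + y^2)^2) volume 0 2 := by
    apply Continuous.intervalIntegrable
    apply Continuous.div continuous_abs (by fun_prop)
    intro y; positivity
  rw [even_int heven hII, int_inner_pos hc]
  have h1 : (0:ℝ) < c + 4 := by linarith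
  have h2 : (0:ℝ) ≤ 1/(c+4) := by positivity
  have he : 2 * (1/(2*c) - 1/(2*(c+4))) = 1/c - 1/(c+4) := by field_simp
  linarith

lemma int_log {e : ℝ} (he : 0 < e) (he2 : e ≤ 1/2) :
    ∫ x in (2*e)..2, x/(x^2 - e^2) = 1/2 * (Real.log (4 - e^2) - Real.log (3*e^2)) := by
  have hkey : ∀ x ∈ uIcc (2*e) 2, (0:ℝ) < x^2 - e^2 := by
    intro x hx
    rw [uIcc_of_le (by linarith)] at hx
    nlinarith [hx.1, hx.2, he]
  have hd : ∀ x ∈ uIcc (2*e) 2, HasDerivAt (fun x : ℝ => 1/2 * Real.log (x^2 - e^2))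
      (x/(x^2 - e^2)) x := by
    intro x hx
    have h1 : HasDerivAt (fun x : ℝ => x^2 - e^2) (2*x) x := by
      simpa using ((hasDerivAt_pow 2 x).sub_const (e^2))
    have hne : x^2 - e^2 ≠ 0 := ne_of_gt (hkey x hx)
    have h2 := (h1.log hne).const_mul (1/2 : ℝ)
    refine h2.congr_deriv ?_
    field_simp
    try ring
  rw [intervalIntegral.integral_eq_sub_of_hasDerivAt hd]
  · have h1 : (2:ℝ)^2 - e^2 = 4 - e^2 := by ring
    have h2 : (2*e)^2 - e^2 = 3*e^2 := by ring
    rw [h1, h2]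
    ring
  · apply ContinuousOn.intervalIntegrable
    apply ContinuousOn.div (continuousOn_id) (by fun_prop)
    intro x hx
    exact ne_of_gt (hkey x hx)

lemma int_cube {e : ℝ} (he : 0 < e) (he2 : e ≤ 1/2) :
    ∫ x in (2*e)..2, (|x|^3)⁻¹ ≤ 1/(8*e^2) := by
  have hpos : ∀ x ∈ uIcc (2*e) 2, (0:ℝ) < x := by
    intro x hx
    rw [uIcc_of_le (by linarith)] at hx
    linarith [hx.1]
  have hcong : ∫ x in (2*e)..2, (|x|^3)⁻¹ = ∫ x in (2*e)..2, (x^3)⁻¹ := by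
    apply intervalIntegral.integral_congr
    intro x hx
    dsimp only
    rw [abs_of_pos (hpos x hx)]
  have hd : ∀ x ∈ uIcc (2*e) 2, HasDerivAt (fun x : ℝ => -(1/2 : ℝ) * (x^2)⁻¹)
      ((x^3)⁻¹) x := by
    intro x hx
    have hx0 : x ≠ 0 := ne_of_gt (hpos x hx)
    have h1 := ((hasDerivAt_pow 2 x).inv (pow_ne_zero 2 hx0)).const_mul (-(1/2 : ℝ))
    refine h1.congr_deriv ?_
    field_simp
    ring
  rw [hcong, intervalIntegral.integral_eq_sub_of_hasDerivAt hd]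
  · have h1 : ((2*e)^2)⁻¹ = (4*e^2)⁻¹ := by norm_num; ring_nf
    have h2 : (0:ℝ) < e^2 := by positivity
    rw [h1]
    have hk : -(1/2 : ℝ) * ((2:ℝ)^2)⁻¹ - -(1/2 : ℝ)*((4*e^2)⁻¹) = 1/(8*e^2) - 1/8 := by
      field_simp
      ring
    linarith [hk]
  · apply ContinuousOn.intervalIntegrable
    apply ContinuousOn.inv₀ (by fun_prop)
    intro x hx
    exact ne_of_gt (pow_pos (hpos x hx) 3)


lemma s_mul {a b : ℝ} : s a * s b = (Real.sqrt (|a| * |b|))⁻¹ := by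
  rw [s, s, Real.sqrt_mul (abs_nonneg a), mul_inv]

/-- kernel bound: `|d₂|/(d₁²+d₂²) ≤ s d₁ · s d₂`. -/
lemma kernel_bound {d1 d2 : ℝ} (hd1 : d1 ≠ 0) (hd2 : d2 ≠ 0) :
    |d2 / (d1^2 + d2^2)| ≤ s d1 * s d2 := by
  have hQ : 0 < d1^2 + d2^2 := by positivity
  have hab : 0 < |d1| * |d2| := by positivity
  rw [abs_div, abs_of_pos hQ, s_mul, div_le_iff₀ hQ, inv_mul_eq_div,
    le_div_iff₀ (Real.sqrt_pos.mpr hab)]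
  have h1 : |d2| * Real.sqrt (|d1| * |d2|) = Real.sqrt (|d1| * |d2|^3) := by
    nth_rewrite 1 [← Real.sqrt_sq (abs_nonneg d2)]
    rw [← Real.sqrt_mul (sq_nonneg _)]
    congr 1
    ring
  rw [h1]
  have h2 : |d1| * |d2|^3 ≤ (d1^2 + d2^2)^2 := by
    nlinarith [sq_nonneg (|d1| - |d2|), sq_nonneg (|d1| * |d2|), abs_nonneg d1, abs_nonneg d2,
      sq_abs d1, sq_abs d2, mul_nonneg (abs_nonneg d1) (abs_nonneg d2)]
  calc Real.sqrt (|d1| * |d2|^3) ≤ Real.sqrt ((d1^2 + d2^2)^2) := Real.sqrt_le_sqrt h2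
    _ = d1^2 + d2^2 := Real.sqrt_sq hQ.le

lemma kernel_bound_far {d1 d2 : ℝ} (h : 1 ≤ d1^2 + d2^2) :
    |d2 / (d1^2 + d2^2)| ≤ 1 := by
  have hQ : 0 < d1^2 + d2^2 := by linarith
  rw [abs_div, abs_of_pos hQ, div_le_one hQ]
  nlinarith [sq_nonneg (|d2| - 1), sq_abs d2]

/-- Near-region auxiliary bound for `z1 ≥ 0`. -/
lemma near_aux {e z1 z2 : ℝ} (he : 0 < e) (h1 : z1 ≤ 2*e) (h0 : 0 ≤ z1) (hz2 : z2 ≠ 0)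
    (hz1 : z1 ≠ e) :
    |4*e*z1*z2 / (((z1-e)^2+z2^2) * ((z1+e)^2+z2^2))| ≤ 8 * s (z1-e) * s z2 := by
  set a := |z1 - e| with ha_def
  set b := |z2| with hb_def
  have ha : 0 < a := abs_pos.mpr (sub_ne_zero.mpr hz1)
  have hb : 0 < b := abs_pos.mpr hz2
  have hA0 : (0:ℝ) < (z1-e)^2+z2^2 := by positivity
  have hB0 : (0:ℝ) < (z1+e)^2+z2^2 := by positivity
  have hA1 : 2*a*b ≤ (z1-e)^2+z2^2 := by
    nlinarith [sq_nonneg (a - b), sq_abs (z1-e), sq_abs z2]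
  have hA2 : b^2 ≤ (z1-e)^2+z2^2 := by nlinarith [sq_abs z2, sq_nonneg (z1-e)]
  have hB : e^2 ≤ (z1+e)^2+z2^2 := by nlinarith [sq_nonneg z2, sq_nonneg z1, mul_nonneg h0 he.le]
  have hsq : Real.sqrt a * Real.sqrt b * b ≤ (z1-e)^2+z2^2 := by
    have h2 : a * b^3 ≤ ((z1-e)^2+z2^2)^2 := by nlinarith [mul_nonneg ha.le hb.le]
    have h3 : Real.sqrt (a * b^3) = Real.sqrt a * Real.sqrt b * b := by
      rw [show a * b^3 = a * b * b^2 by ring, Real.sqrt_mul (by positivity),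
        Real.sqrt_sq hb.le, Real.sqrt_mul ha.le]
    calc Real.sqrt a * Real.sqrt b * b = Real.sqrt (a * b^3) := h3.symm
      _ ≤ Real.sqrt (((z1-e)^2+z2^2)^2) := Real.sqrt_le_sqrt h2
      _ = (z1-e)^2+z2^2 := Real.sqrt_sq hA0.le
  -- |K| = 4 e z1 b / (A B)
  have habs : |4*e*z1*z2 / (((z1-e)^2+z2^2) * ((z1+e)^2+z2^2))|
      = 4*e*z1*b / (((z1-e)^2+z2^2) * ((z1+e)^2+z2^2)) := by
    rw [abs_div, abs_of_pos (mul_pos hA0 hB0), abs_mul]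
    congr 1
    rw [abs_of_nonneg (by positivity : (0:ℝ) ≤ 4*e*z1)]
  rw [habs]
  have hgoal : 8 * s (z1-e) * s z2 = 8 / (Real.sqrt a * Real.sqrt b) := by
    rw [s, s, ← ha_def, ← hb_def]
    field_simp
  rw [hgoal, div_le_div_iff₀ (mul_pos hA0 hB0) (by positivity)]
  have hkey : (Real.sqrt a * Real.sqrt b * b) * e^2 ≤ (((z1-e)^2+z2^2) * ((z1+e)^2+z2^2)) :=
    mul_le_mul hsq hB (sq_nonneg e) hA0.le
  have hstep : 4*e*z1*(b*(Real.sqrt a*Real.sqrt b)) ≤ 4*e*(2*e)*(b*(Real.sqrt a*Real.sqrt b)) := by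
    apply mul_le_mul_of_nonneg_right _ (by positivity)
    nlinarith
  calc 4*e*z1*b*(Real.sqrt a*Real.sqrt b) = 4*e*z1*(b*(Real.sqrt a*Real.sqrt b)) := by ring
    _ ≤ 4*e*(2*e)*(b*(Real.sqrt a*Real.sqrt b)) := hstep
    _ = 8*((Real.sqrt a*Real.sqrt b*b)*e^2) := by ring
    _ ≤ 8*(((z1-e)^2+z2^2) * ((z1+e)^2+z2^2)) := by linarith [hkey]

/-- Near-region bound. -/
lemma near_bound {e z1 z2 : ℝ} (he : 0 < e) (h1 : |z1| ≤ 2*e) (hz2 : z2 ≠ 0)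
    (hne : z1 ≠ e) (hne' : z1 ≠ -e) :
    |4*e*z1*z2 / (((z1-e)^2+z2^2) * ((z1+e)^2+z2^2))| ≤
      8 * (s (z1-e) + s (z1+e)) * s z2 := by
  rcases le_or_gt 0 z1 with h0 | h0
  · have := near_aux he (le_trans (le_abs_self z1) h1) h0 hz2 hne
    have hle : 8 * s (z1-e) * s z2 ≤ 8 * (s (z1-e) + s (z1+e)) * s z2 := by
      have := s_nonneg (z1+e)
      have := s_nonneg z2
      nlinarith [s_nonneg (z1-e)]
    linarith
  · have h1' : |(-z1)| ≤ 2*e := by rwa [abs_neg]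
    have hne2 : -z1 ≠ e := fun h => hne' (by linarith [h])
    have := near_aux he (le_trans (le_abs_self (-z1)) h1') (by linarith) hz2 hne2
    have heq : |4*e*(-z1)*z2 / ((((-z1)-e)^2+z2^2) * (((-z1)+e)^2+z2^2))|
        = |4*e*z1*z2 / (((z1-e)^2+z2^2) * ((z1+e)^2+z2^2))| := by
      rw [show (((-z1)-e)^2+z2^2) * (((-z1)+e)^2+z2^2)
          = (((z1-e)^2+z2^2) * ((z1+e)^2+z2^2)) by ring]
      rw [abs_div, abs_div, show 4*e*(-z1)*z2 = -(4*e*z1*z2) by ring, abs_neg]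
    have hs : s ((-z1) - e) = s (z1 + e) := by
      rw [show (-z1) - e = -(z1+e) by ring, s_even]
    rw [heq, hs] at this
    have hle : 8 * s (z1+e) * s z2 ≤ 8 * (s (z1-e) + s (z1+e)) * s z2 := by
      nlinarith [s_nonneg (z1-e), s_nonneg (z1+e), s_nonneg z2]
    linarith

/-- product of the two shifted squared distances dominates `(r²-e²)²`. -/
lemma AB_ge {e z1 z2 : ℝ} :
    (z1^2+z2^2-e^2)^2 ≤ ((z1-e)^2+z2^2) * ((z1+e)^2+z2^2) := by
  nlinarith [sq_nonneg (e*z2), sq_nonneg z2, sq_nonneg e]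

/-- Middle-region (M1) bound. -/
lemma M1_bound {e z1 z2 : ℝ} (he : 0 < e) (h1 : 4*e^2 ≤ z1^2) :
    |4*e*z1*z2 / (((z1-e)^2+z2^2) * ((z1+e)^2+z2^2))| ≤
      4*e*(|z1| * |z2|) / (z1^2+z2^2-e^2)^2 := by
  have hr : 3*e^2 ≤ z1^2+z2^2-e^2 := by nlinarith [sq_nonneg z2]
  have hr0 : 0 < z1^2+z2^2-e^2 := by nlinarith
  have hAB : 0 < ((z1-e)^2+z2^2) * ((z1+e)^2+z2^2) :=
    lt_of_lt_of_le (by positivity) AB_ge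
  rw [abs_div, abs_of_pos hAB]
  have hnum : |4*e*z1*z2| = 4*e*(|z1| * |z2|) := by
    rw [abs_mul, abs_mul, abs_mul]
    rw [abs_of_nonneg (by norm_num : (0:ℝ) ≤ 4), abs_of_pos he]
    ring
  rw [hnum]
  apply div_le_div_of_nonneg_left _ (by positivity) AB_ge
  positivity

/-- M2 bound. -/
lemma M2_bound {e z1 z2 : ℝ} (he : 0 < e) (h1 : z1^2 ≤ 4*e^2) (h2 : 4*e^2 ≤ z2^2) :
    |4*e*z1*z2 / (((z1-e)^2+z2^2) * ((z1+e)^2+z2^2))| ≤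
      8*e*|z1| * (|z2| ^ 3)⁻¹ := by
  have hz2 : z2 ≠ 0 := by
    intro h; rw [h] at h2; nlinarith
  have hb : 0 < |z2| := abs_pos.mpr hz2
  have hr : (3/4)*z2^2 ≤ z1^2+z2^2-e^2 := by nlinarith [sq_nonneg z1]
  have hr0 : 0 < z1^2+z2^2-e^2 := by nlinarith [sq_nonneg z1]
  have hAB : (9/16)*z2^4 ≤ ((z1-e)^2+z2^2) * ((z1+e)^2+z2^2) := by
    calc (9/16)*z2^4 = ((3/4)*z2^2)^2 := by ring
      _ ≤ (z1^2+z2^2-e^2)^2 := by nlinarith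
      _ ≤ _ := AB_ge
  have hABpos : 0 < ((z1-e)^2+z2^2) * ((z1+e)^2+z2^2) := by
    have : (0:ℝ) < (9/16)*z2^4 := by positivity
    linarith
  rw [abs_div, abs_of_pos hABpos]
  rw [div_le_iff₀ hABpos]
  have hnum : |4*e*z1*z2| = 4*e*(|z1| * |z2|) := by
    rw [abs_mul, abs_mul, abs_mul,
      abs_of_nonneg (by norm_num : (0:ℝ) ≤ 4), abs_of_pos he]
    ring
  rw [hnum]
  have h3 : 8*e*|z1| * (|z2| ^ 3)⁻¹ * ((9/16)*z2^4) = (9/2)*e*(|z1| * |z2|) := by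
    have h4 : z2^4 = |z2| ^ 3 * |z2| := by
      rw [show |z2| ^ 3 * |z2| = |z2| ^ 4 by ring, ← abs_pow,
        abs_of_nonneg (by positivity : (0:ℝ) ≤ z2^4)]
    rw [h4]
    field_simp
    ring
  calc 4*e*(|z1| * |z2|) ≤ (9/2)*e*(|z1| * |z2|) := by
        nlinarith [abs_nonneg z1, abs_nonneg z2, he.le, mul_nonneg (abs_nonneg z1) (abs_nonneg z2)]
    _ = 8*e*|z1| * (|z2| ^ 3)⁻¹ * ((9/16)*z2^4) := h3.symm
    _ ≤ 8*e*|z1| * (|z2| ^ 3)⁻¹ * (((z1-e)^2+z2^2) * ((z1+e)^2+z2^2)) := by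
        apply mul_le_mul_of_nonneg_left hAB (by positivity)

/-- Far-region bound. -/
lemma F_bound {e z1 z2 : ℝ} (he : 0 < e) (he2 : e ≤ 1/2) (h1 : 4 < z1^2 + z2^2) :
    |4*e*z1*z2 / (((z1-e)^2+z2^2) * ((z1+e)^2+z2^2))| ≤ e := by
  have hr : (3/4)*(z1^2+z2^2) ≤ z1^2+z2^2-e^2 := by nlinarith
  have hAB : (9/16)*(z1^2+z2^2)^2 ≤ ((z1-e)^2+z2^2) * ((z1+e)^2+z2^2) := by
    calc (9/16)*(z1^2+z2^2)^2 = ((3/4)*(z1^2+z2^2))^2 := by ring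
      _ ≤ (z1^2+z2^2-e^2)^2 := by nlinarith
      _ ≤ _ := AB_ge
  have hABpos : 0 < ((z1-e)^2+z2^2) * ((z1+e)^2+z2^2) := by nlinarith
  rw [abs_div, abs_of_pos hABpos, div_le_iff₀ hABpos]
  have hnum : |4*e*z1*z2| = 4*e*(|z1| * |z2|) := by
    rw [abs_mul, abs_mul, abs_mul,
      abs_of_nonneg (by norm_num : (0:ℝ) ≤ 4), abs_of_pos he]
    ring
  rw [hnum]
  have h2 : |z1| * |z2| ≤ (z1^2+z2^2)/2 := by
    nlinarith [sq_nonneg (|z1|-|z2|), sq_abs z1, sq_abs z2]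
  calc 4*e*(|z1| * |z2|) ≤ 4*e*((z1^2+z2^2)/2) := by
        apply mul_le_mul_of_nonneg_left h2 (by positivity)
    _ = e * (2*(z1^2+z2^2)) := by ring
    _ ≤ e * ((9/16)*(z1^2+z2^2)^2) := by
        apply mul_le_mul_of_nonneg_left _ he.le
        nlinarith [mul_pos (by linarith : (0:ℝ) < z1^2+z2^2-4)
          (by nlinarith : (0:ℝ) < z1^2+z2^2)]
    _ ≤ e * (((z1-e)^2+z2^2) * ((z1+e)^2+z2^2)) := by
        apply mul_le_mul_of_nonneg_left hAB he.le


lemma null_vline (c : ℝ) : (volume : Measure (ℝ × ℝ)) {y : ℝ × ℝ | y.1 = c} = 0 := by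
  have h : {y : ℝ × ℝ | y.1 = c} = ({c} : Set ℝ) ×ˢ (univ : Set ℝ) := by
    ext ⟨a, b⟩; simp [Set.mem_prod, eq_comm]
  rw [h, Measure.volume_eq_prod, Measure.prod_prod]
  simp

lemma null_hline (c : ℝ) : (volume : Measure (ℝ × ℝ)) {y : ℝ × ℝ | y.2 = c} = 0 := by
  have h : {y : ℝ × ℝ | y.2 = c} = (univ : Set ℝ) ×ˢ ({c} : Set ℝ) := by
    ext ⟨a, b⟩; simp [Set.mem_prod, eq_comm]
  rw [h, Measure.volume_eq_prod, Measure.prod_prod]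
  simp

/-- shifted `s` is integrable on the shifted interval, as an indicator function. -/
lemma integrable_indicator_s (c a b : ℝ) :
    Integrable ((Icc a b).indicator (fun t => s (t - c))) volume := by
  have h0 : IntervalIntegrable (fun t => s (t - c)) volume (a) (b) := by
    have := (II_s (a - c) (b - c)).comp_sub_right c
    simpa using this
  rcases le_or_gt a b with hab | hab
  · have h1 : IntegrableOn (fun t => s (t - c)) (Ioc a b) volume := by
      rwa [intervalIntegrable_iff_integrableOn_Ioc_of_le hab] at h0
    have h2 : IntegrableOn (fun t => s (t - c)) (Icc a b) volume :=
      h1.congr_set_ae (Ioc_ae_eq_Icc (μ := volume) (a := a) (b := b)).symm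
    exact h2.integrable_indicator measurableSet_Icc
  · have : Icc a b = ∅ := Icc_eq_empty_of_lt hab
    rw [this]
    simp [integrable_zero]

lemma meas_kernel (x : ℝ × ℝ) :
    Measurable (fun y : ℝ × ℝ => (x.2 - y.2) / ((x.1 - y.1)^2 + (x.2 - y.2)^2)) := by
  apply Measurable.div
  · fun_prop
  · fun_prop

/-- Step A: the Biot–Savart integrand is integrable. -/
lemma integrable_kernel_mul (x : ℝ × ℝ) {ω : ℝ × ℝ → ℝ}
    (hm : AEStronglyMeasurable ω (volume : Measure (ℝ × ℝ)))
    (hω1 : ∀ᵐ y : ℝ × ℝ, |ω y| ≤ 1) (hωi : Integrable ω (volume : Measure (ℝ × ℝ))) :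
    Integrable (fun y : ℝ × ℝ =>
      ((x.2 - y.2) / ((x.1 - y.1)^2 + (x.2 - y.2)^2)) * ω y) volume := by
  set q1 : ℝ → ℝ := (Icc (x.1-1) (x.1+1)).indicator (fun t => s (t - x.1)) with hq1_def
  set q2 : ℝ → ℝ := (Icc (x.2-1) (x.2+1)).indicator (fun t => s (t - x.2)) with hq2_def
  have hq1 : Integrable q1 volume := integrable_indicator_s x.1 _ _
  have hq2 : Integrable q2 volume := integrable_indicator_s x.2 _ _
  have hprod : Integrable (fun z : ℝ × ℝ => q1 z.1 * q2 z.2) volume := by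
    rw [Measure.volume_eq_prod]
    exact hq1.mul_prod hq2
  have hD : Integrable (fun z : ℝ × ℝ => q1 z.1 * q2 z.2 + |ω z|) volume :=
    hprod.add hωi.abs
  apply Integrable.mono' hD ((meas_kernel x).aestronglyMeasurable.mul hm)
  have h1 : ∀ᵐ y : ℝ × ℝ, y.1 ≠ x.1 := by
    have := measure_eq_zero_iff_ae_notMem.mp (null_vline x.1)
    filter_upwards [this] with y hy
    simpa using hy
  have h2 : ∀ᵐ y : ℝ × ℝ, y.2 ≠ x.2 := by
    have := measure_eq_zero_iff_ae_notMem.mp (null_hline x.2)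
    filter_upwards [this] with y hy
    simpa using hy
  filter_upwards [hω1, h1, h2] with y hωy hy1 hy2
  have hd1 : x.1 - y.1 ≠ 0 := fun h => hy1 (by linarith [sub_eq_zero.mp h])
  have hd2 : x.2 - y.2 ≠ 0 := fun h => hy2 (by linarith [sub_eq_zero.mp h])
  have hker_nn : (0:ℝ) ≤ q1 y.1 * q2 y.2 :=
    mul_nonneg (indicator_nonneg (fun t _ => s_nonneg _) _)
      (indicator_nonneg (fun t _ => s_nonneg _) _)
  have hω_nn : (0:ℝ) ≤ |ω y| := abs_nonneg _
  simp only [Pi.mul_apply, Real.norm_eq_abs, abs_mul]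
  by_cases hc : y.1 ∈ Icc (x.1-1) (x.1+1) ∧ y.2 ∈ Icc (x.2-1) (x.2+1)
  · -- near case
    have hk := kernel_bound hd1 hd2
    have hq1y : q1 y.1 = s (x.1 - y.1) := by
      rw [hq1_def, indicator_of_mem hc.1]
      rw [show y.1 - x.1 = -(x.1 - y.1) by ring, s_even]
    have hq2y : q2 y.2 = s (x.2 - y.2) := by
      rw [hq2_def, indicator_of_mem hc.2]
      rw [show y.2 - x.2 = -(x.2 - y.2) by ring, s_even]
    have : |(x.2 - y.2) / ((x.1 - y.1)^2 + (x.2 - y.2)^2)| * |ω y| ≤ s (x.1-y.1) * s (x.2-y.2) := by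
      calc |(x.2 - y.2) / ((x.1 - y.1)^2 + (x.2 - y.2)^2)| * |ω y|
          ≤ |(x.2 - y.2) / ((x.1 - y.1)^2 + (x.2 - y.2)^2)| * 1 :=
            mul_le_mul_of_nonneg_left hωy (abs_nonneg _)
        _ = |(x.2 - y.2) / ((x.1 - y.1)^2 + (x.2 - y.2)^2)| := mul_one _
        _ ≤ s (x.1-y.1) * s (x.2-y.2) := hk
    rw [hq1y, hq2y]
    linarith
  · -- far case
    have key : ∀ t c : ℝ, t ∉ Icc (c-1) (c+1) → 1 ≤ (c - t)^2 := by
      intro t c h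
      simp only [mem_Icc, not_and_or, not_le] at h
      rcases h with h | h
      · nlinarith
      · nlinarith
    have hfar : 1 ≤ (x.1 - y.1)^2 + (x.2 - y.2)^2 := by
      rcases not_and_or.mp hc with hc1 | hc1
      · linarith [key y.1 x.1 hc1, sq_nonneg (x.2 - y.2)]
      · linarith [key y.2 x.2 hc1, sq_nonneg (x.1 - y.1)]
    have hk := kernel_bound_far hfar
    have : |(x.2 - y.2) / ((x.1 - y.1)^2 + (x.2 - y.2)^2)| * |ω y| ≤ |ω y| := by
      calc |(x.2 - y.2) / ((x.1 - y.1)^2 + (x.2 - y.2)^2)| * |ω y| ≤ 1 * |ω y| :=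
        mul_le_mul_of_nonneg_right hk hω_nn
      _ = |ω y| := one_mul _
    linarith


def U (e : ℝ) : Set ℝ := Icc (-(2*e)) (2*e)
def Tm (e : ℝ) : Set ℝ := T (2*e) 2

lemma int_indicator_s {c a b : ℝ} (hac : a ≤ c) (hcb : c ≤ b) :
    ∫ t, (Icc a b).indicator (fun t => s (t - c)) t =
      2*Real.sqrt (c-a) + 2*Real.sqrt (b-c) := by
  rw [MeasureTheory.integral_indicator measurableSet_Icc, integral_Icc_eq_integral_Ioc,
    ← intervalIntegral.integral_of_le (le_trans hac hcb),
    intervalIntegral.integral_comp_sub_right _ c,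
    show a - c = -(c-a) by ring]
  exact int_s (c-a) (b-c) (by linarith) (by linarith)

lemma sqrt3_le : Real.sqrt 3 ≤ 2 := by
  nlinarith [Real.sq_sqrt (show (0:ℝ) ≤ 3 by norm_num), Real.sqrt_nonneg 3,
    sq_nonneg (Real.sqrt 3 - 2)]

lemma sqrt2_le : Real.sqrt 2 ≤ 3/2 := by
  nlinarith [Real.sq_sqrt (show (0:ℝ) ≤ 2 by norm_num), Real.sqrt_nonneg 2,
    sq_nonneg (Real.sqrt 2 - 3/2)]

section Gbounds
variable {e : ℝ}

/-- first factor of near-region dominator -/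
lemma f1_spec (he : 0 < e) : Integrable ((U e).indicator (fun t => 8*(s (t-e) + s (t+e)))) volume ∧
    ∫ t, (U e).indicator (fun t => 8*(s (t-e) + s (t+e))) t ≤ 96 * Real.sqrt e := by
  have hfun : (U e).indicator (fun t => 8*(s (t-e) + s (t+e)))
      = fun t => 8*((Icc (-(2*e)) (2*e)).indicator (fun t => s (t-e)) t
        + (Icc (-(2*e)) (2*e)).indicator (fun t => s (t - (-e))) t) := by
    funext t
    by_cases h : t ∈ Icc (-(2*e)) (2*e)
    · simp only [U, indicator_of_mem h, sub_neg_eq_add]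
    · simp only [U, indicator_of_notMem h, mul_zero, add_zero]
  have hi1 := integrable_indicator_s e (-(2*e)) (2*e)
  have hi2 := integrable_indicator_s (-e) (-(2*e)) (2*e)
  constructor
  · rw [hfun]
    exact (hi1.add hi2).const_mul 8
  · rw [hfun]
    rw [MeasureTheory.integral_const_mul, MeasureTheory.integral_add hi1 hi2]
    rw [int_indicator_s (by linarith) (by linarith), int_indicator_s (by linarith) (by linarith)]
    have h1 : e - -(2*e) = 3*e := by ring
    have h2 : (2*e) - e = e := by ring
    have h3 : -e - -(2*e) = e := by ring
    have h4 : (2*e) - -e = 3*e := by ring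
    rw [h1, h2, h3, h4]
    have h5 : Real.sqrt (3*e) ≤ 2 * Real.sqrt e := by
      rw [Real.sqrt_mul (by norm_num : (0:ℝ) ≤ 3)]
      have := Real.sqrt_nonneg e
      nlinarith [sqrt3_le]
    nlinarith [Real.sqrt_nonneg e]

/-- second factor of near-region dominator -/
lemma f2_spec (he : 0 < e) : Integrable ((U e).indicator s) volume ∧
    ∫ t, (U e).indicator s t ≤ 6 * Real.sqrt e := by
  have hcong : (U e).indicator s = (Icc (-(2*e)) (2*e)).indicator (fun t => s (t - 0)) := by
    simp [U]
  constructor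
  · rw [hcong]; exact integrable_indicator_s 0 _ _
  · rw [hcong, int_indicator_s (by linarith) (by linarith)]
    have h1 : (0:ℝ) - -(2*e) = 2*e := by ring
    have h2 : 2*e - 0 = 2*e := by ring
    rw [h1, h2]
    have h5 : Real.sqrt (2*e) ≤ (3/2) * Real.sqrt e := by
      rw [Real.sqrt_mul (by norm_num : (0:ℝ) ≤ 2)]
      have := Real.sqrt_nonneg e
      nlinarith [sqrt2_le]
    nlinarith [Real.sqrt_nonneg e]

/-- G1 near-region dominator -/
lemma G1_spec (he : 0 < e) : Integrable (fun z : ℝ × ℝ =>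
      ((U e).indicator (fun t => 8*(s (t-e) + s (t+e))) z.1) * ((U e).indicator s z.2)) volume ∧
    ∫ z : ℝ × ℝ, ((U e).indicator (fun t => 8*(s (t-e) + s (t+e))) z.1)
      * ((U e).indicator s z.2) ≤ 576 * e := by
  obtain ⟨hi1, hv1⟩ := f1_spec (e := e) he
  obtain ⟨hi2, hv2⟩ := f2_spec (e := e) he
  have hnn1 : 0 ≤ ∫ t, (U e).indicator (fun t => 8*(s (t-e) + s (t+e))) t := by
    apply MeasureTheory.integral_nonneg
    intro t
    apply indicator_nonneg
    intro x _
    have := s_nonneg (x - e); have := s_nonneg (x + e); linarith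
  have hnn2 : 0 ≤ ∫ t, (U e).indicator s t := by
    apply MeasureTheory.integral_nonneg
    intro t
    exact indicator_nonneg (fun x _ => s_nonneg x) t
  constructor
  · rw [Measure.volume_eq_prod]
    exact hi1.mul_prod hi2
  · rw [Measure.volume_eq_prod, MeasureTheory.integral_prod_mul]
    calc (∫ t, (U e).indicator (fun t => 8*(s (t-e) + s (t+e))) t) * ∫ t, (U e).indicator s t
        ≤ (96 * Real.sqrt e) * (6 * Real.sqrt e) := by
          apply mul_le_mul hv1 hv2 hnn2 (by positivity)
      _ = 576 * (Real.sqrt e * Real.sqrt e) := by ring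
      _ = 576 * e := by rw [Real.mul_self_sqrt he.le]

lemma intOn_T {f : ℝ → ℝ} (hf : ∀ x, f (-x) = f x) {a b : ℝ} (hab : a ≤ b)
    (h : IntervalIntegrable f volume a b) : IntegrableOn f (T a b) volume := by
  have hIoc : IntegrableOn f (Ioc a b) volume := by
    rwa [intervalIntegrable_iff_integrableOn_Ioc_of_le hab] at h
  have hneg : IntervalIntegrable f volume (-b) (-a) := by
    have := (IntervalIntegrable.iff_comp_neg).mp h
    simp only [hf] at this
    exact this.symm
  have hIoc2 : IntegrableOn f (Ioc (-b) (-a)) volume := by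
    rwa [intervalIntegrable_iff_integrableOn_Ioc_of_le (by linarith)] at hneg
  exact hIoc.union hIoc2

lemma cube_even : ∀ x : ℝ, (|(-x)| ^ 3)⁻¹ = (|x| ^ 3)⁻¹ := by
  intro x; rw [abs_neg]

lemma cube_II (he : 0 < e) (he2 : e ≤ 1/2) : IntervalIntegrable (fun t : ℝ => (|t| ^ 3)⁻¹) volume (2*e) 2 := by
  have hpos : ∀ x ∈ uIcc (2*e) 2, (0:ℝ) < x := by
    intro x hx
    rw [uIcc_of_le (by linarith)] at hx
    linarith [hx.1]
  apply ContinuousOn.intervalIntegrable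
  apply ContinuousOn.inv₀ (by fun_prop)
  intro x hx
  exact ne_of_gt (pow_pos (abs_pos.mpr (ne_of_gt (hpos x hx))) 3)

/-- G3 dominator -/
lemma G3_spec (he : 0 < e) (he2 : e ≤ 1/2) : Integrable (fun z : ℝ × ℝ =>
      ((U e).indicator (fun t => 8*e*|t|) z.1) * ((Tm e).indicator (fun t => (|t| ^ 3)⁻¹) z.2)) volume ∧
    ∫ z : ℝ × ℝ, ((U e).indicator (fun t => 8*e*|t|) z.1)
      * ((Tm e).indicator (fun t => (|t| ^ 3)⁻¹) z.2) ≤ 8 * e := by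
  have hi1 : Integrable ((U e).indicator (fun t => 8*e*|t|)) volume := by
    apply IntegrableOn.integrable_indicator _ measurableSet_Icc
    exact (continuous_const.mul continuous_abs).integrableOn_Icc
  have hi2 : Integrable ((Tm e).indicator (fun t => (|t| ^ 3)⁻¹)) volume := by
    apply IntegrableOn.integrable_indicator _ (T_measurable _ _)
    exact intOn_T cube_even (by linarith) (cube_II he he2)
  have hv1 : ∫ t, (U e).indicator (fun t => 8*e*|t|) t = 32 * e^3 := by
    simp only [U]
    rw [MeasureTheory.integral_indicator measurableSet_Icc, integral_Icc_eq_integral_Ioc,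
      ← intervalIntegral.integral_of_le (by linarith : -(2*e) ≤ 2*e)]
    have heven : ∀ x : ℝ, 8*e*|(-x)| = 8*e*|x| := by intro x; rw [abs_neg]
    have hII : IntervalIntegrable (fun t : ℝ => 8*e*|t|) volume 0 (2*e) :=
      (continuous_abs.intervalIntegrable _ _).const_mul _
    rw [even_int heven hII]
    have : ∫ x in (0:ℝ)..(2*e), 8*e*|x| = ∫ x in (0:ℝ)..(2*e), 8*e*x := by
      apply intervalIntegral.integral_congr
      intro x hx
      rw [uIcc_of_le (by linarith)] at hx
      dsimp only
      rw [abs_of_nonneg hx.1]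
    rw [this, intervalIntegral.integral_const_mul, integral_id]
    ring
  have hv2 : ∫ t, (Tm e).indicator (fun t => (|t| ^ 3)⁻¹) t ≤ 1/(4*e^2) := by
    simp only [Tm]
    rw [MeasureTheory.integral_indicator (T_measurable _ _),
      int_T cube_even (by linarith) (by linarith) (cube_II he he2)]
    have h1 := int_cube he he2
    have h2 : 1/(4*e^2) = 2*(1/(8*e^2)) := by
      field_simp
      ring
    linarith
  have hnn2 : 0 ≤ ∫ t, (Tm e).indicator (fun t => (|t| ^ 3)⁻¹) t :=
    MeasureTheory.integral_nonneg (fun t => indicator_nonneg (fun x _ => by positivity) t)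
  constructor
  · rw [Measure.volume_eq_prod]; exact hi1.mul_prod hi2
  · rw [Measure.volume_eq_prod, MeasureTheory.integral_prod_mul, hv1]
    calc 32*e^3 * ∫ t, (Tm e).indicator (fun t => (|t| ^ 3)⁻¹) t
        ≤ 32*e^3 * (1/(4*e^2)) := by
          apply mul_le_mul_of_nonneg_left hv2 (by positivity)
      _ = 8 * e := by field_simp; ring

end Gbounds


section G2sec
variable {e : ℝ}

lemma mem_Tm {x : ℝ} (he : 0 < e) (hx : x ∈ Tm e) :
    3*e^2 ≤ x^2 - e^2 ∧ x^2 ≤ 4 ∧ |x| ≤ 2 ∧ 2*e ≤ |x| := by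
  obtain ⟨h1, h2⟩ := mem_T (by positivity) hx
  have h5 := mul_le_mul h1 h1 (by positivity) (abs_nonneg x)
  have h6 := mul_le_mul h2 h2 (abs_nonneg x) (by norm_num)
  have h7 : |x| * |x| = x^2 := by rw [← abs_mul, abs_mul_self]; ring
  have h3 : 4*e^2 ≤ x^2 := by nlinarith
  have h4 : x^2 ≤ 4 := by nlinarith
  exact ⟨by nlinarith, h4, h2, h1⟩

lemma G2_spec (he : 0 < e) (he2 : e ≤ 1/2) :
    Integrable (((Tm e) ×ˢ (Icc (-2:ℝ) 2)).indicator
        (fun z : ℝ × ℝ => 4*e*(|z.1| * |z.2|)/(z.1^2+z.2^2-e^2)^2)) volume ∧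
    ∫ z : ℝ × ℝ, ((Tm e) ×ˢ (Icc (-2:ℝ) 2)).indicator
        (fun z : ℝ × ℝ => 4*e*(|z.1| * |z.2|)/(z.1^2+z.2^2-e^2)^2) z
      ≤ 4*e*(Real.log (4-e^2) - Real.log (3*e^2)) := by
  set G : ℝ × ℝ → ℝ := ((Tm e) ×ˢ (Icc (-2:ℝ) 2)).indicator
      (fun z : ℝ × ℝ => 4*e*(|z.1| * |z.2|)/(z.1^2+z.2^2-e^2)^2) with hG_def
  set P1 : ℝ → ℝ := (Tm e).indicator (fun t => 4*e*|t| * ((t^2-e^2)⁻¹)) with hP1_def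
  set P2 : ℝ → ℝ := (Icc (-2:ℝ) 2).indicator (fun t => |t| * ((3*e^2+t^2)⁻¹)) with hP2_def
  have hprodmeas : MeasurableSet ((Tm e) ×ˢ (Icc (-2:ℝ) 2)) :=
    (T_measurable _ _).prod measurableSet_Icc
  have hTsub : Tm e ⊆ Icc (-2:ℝ) 2 := by
    intro x hx
    exact abs_le.mp (mem_Tm he hx).2.2.1
  have hTfin : volume (Tm e) ≠ ⊤ :=
    (lt_of_le_of_lt (measure_mono hTsub) measure_Icc_lt_top).ne
  have hmG : Measurable G := by
    rw [hG_def]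
    apply Measurable.indicator _ hprodmeas
    apply Measurable.div
    · fun_prop
    · fun_prop
  have hP1int : Integrable P1 volume := by
    apply IntegrableOn.integrable_indicator _ (T_measurable _ _)
    refine Measure.integrableOn_of_bounded (M := 8*e*(3*e^2)⁻¹) hTfin ?_ ?_
    · apply Measurable.aestronglyMeasurable
      exact Measurable.mul (by fun_prop) (Measurable.inv (by fun_prop))
    · rw [ae_restrict_iff' (T_measurable _ _)]
      apply ae_of_all
      intro x hx
      obtain ⟨h1, h2, h3, h4⟩ := mem_Tm he hx
      have hc : 0 < x^2 - e^2 := lt_of_lt_of_le (by positivity) h1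
      have hinv : (x^2-e^2)⁻¹ ≤ (3*e^2)⁻¹ := inv_anti₀ (by positivity) h1
      rw [Real.norm_eq_abs, abs_of_nonneg (by positivity)]
      calc 4*e*|x| * (x^2-e^2)⁻¹ ≤ (4*e*2) * (3*e^2)⁻¹ := by
            apply mul_le_mul _ hinv (by positivity) (by positivity)
            nlinarith
        _ = 8*e*(3*e^2)⁻¹ := by ring
  have hP2int : Integrable P2 volume := by
    apply IntegrableOn.integrable_indicator _ measurableSet_Icc
    refine Measure.integrableOn_of_bounded (M := 2*(3*e^2)⁻¹) measure_Icc_lt_top.ne ?_ ?_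
    · apply Measurable.aestronglyMeasurable
      exact measurable_abs.mul (Measurable.inv (by fun_prop))
    · rw [ae_restrict_iff' measurableSet_Icc]
      apply ae_of_all
      intro x hx
      rw [mem_Icc] at hx
      have hx2 : |x| ≤ 2 := abs_le.mpr hx
      have hinv : (3*e^2+x^2)⁻¹ ≤ (3*e^2)⁻¹ := by
        apply inv_anti₀ (by positivity)
        nlinarith [sq_nonneg x]
      rw [Real.norm_eq_abs, abs_of_nonneg (by positivity)]
      apply mul_le_mul hx2 hinv (by positivity) (by norm_num)
  have hPprod : Integrable (fun z : ℝ × ℝ => P1 z.1 * P2 z.2) volume := by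
    rw [Measure.volume_eq_prod]
    exact hP1int.mul_prod hP2int
  have hdom : ∀ z : ℝ × ℝ, ‖G z‖ ≤ P1 z.1 * P2 z.2 := by
    intro z
    have hnnP : 0 ≤ P1 z.1 * P2 z.2 := by
      apply mul_nonneg
      · apply indicator_nonneg
        intro x hx
        have hc : 0 < x^2 - e^2 := lt_of_lt_of_le (by positivity) (mem_Tm he hx).1
        positivity
      · apply indicator_nonneg
        intro x _
        positivity
    by_cases hz : z ∈ (Tm e) ×ˢ (Icc (-2:ℝ) 2)
    · obtain ⟨hz1, hz2⟩ := Set.mem_prod.mp hz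
      have hc : 0 < z.1^2 - e^2 := lt_of_lt_of_le (by positivity) (mem_Tm he hz1).1
      have hd : (0:ℝ) < 3*e^2 + z.2^2 := by positivity
      have hD : 0 < z.1^2+z.2^2-e^2 := by nlinarith [sq_nonneg z.2]
      have hGz : G z = 4*e*(|z.1| * |z.2|)/(z.1^2+z.2^2-e^2)^2 := by
        rw [hG_def]
        exact indicator_of_mem (Set.mem_prod.mpr ⟨hz1, hz2⟩) _
      have hP : P1 z.1 * P2 z.2
          = 4*e*(|z.1| * |z.2|) / ((z.1^2-e^2) * (3*e^2+z.2^2)) := by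
        rw [hP1_def, hP2_def, indicator_of_mem hz1, indicator_of_mem hz2]
        field_simp
      rw [hGz, hP, Real.norm_eq_abs, abs_of_nonneg (by positivity)]
      apply div_le_div_of_nonneg_left (by positivity) (by positivity)
      have h1 := (mem_Tm he hz1).1
      nlinarith [mul_nonneg (sub_nonneg.mpr h1) hc.le, mul_nonneg hc.le (sq_nonneg z.2),
        sq_nonneg (z.2^2)]
    · have hGz : G z = 0 := by
        rw [hG_def]
        exact indicator_of_notMem hz _
      rw [hGz, norm_zero]
      exact hnnP
  have hGint : Integrable G volume := hPprod.mono' hmG.aestronglyMeasurable (ae_of_all _ hdom)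
  refine ⟨hGint, ?_⟩
  have hGint' : Integrable G (volume.prod volume) := by
    rwa [Measure.volume_eq_prod] at hGint
  have hinner : ∀ x : ℝ, (∫ y : ℝ, G (x, y)) ≤ P1 x := by
    intro x
    by_cases hx : x ∈ Tm e
    · have hc : 0 < x^2 - e^2 := lt_of_lt_of_le (by positivity) (mem_Tm he hx).1
      have hfun : (fun y : ℝ => G (x,y))
          = (Icc (-2:ℝ) 2).indicator (fun y => 4*e*(|x| * |y|)/(x^2+y^2-e^2)^2) := by
        funext y
        by_cases hy : y ∈ Icc (-2:ℝ) 2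
        · rw [hG_def]
          rw [indicator_of_mem (show (x,y) ∈ (Tm e) ×ˢ (Icc (-2:ℝ) 2) from
              Set.mem_prod.mpr ⟨hx, hy⟩), indicator_of_mem hy]
        · rw [hG_def]
          rw [indicator_of_notMem (show (x,y) ∉ (Tm e) ×ˢ (Icc (-2:ℝ) 2) from
              fun h => hy (Set.mem_prod.mp h).2), indicator_of_notMem hy]
      rw [hfun, MeasureTheory.integral_indicator measurableSet_Icc,
        integral_Icc_eq_integral_Ioc,
        ← intervalIntegral.integral_of_le (by norm_num : (-2:ℝ) ≤ 2)]
      have hcong : ∫ y in (-2:ℝ)..2, 4*e*(|x| * |y|)/(x^2+y^2-e^2)^2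
          = ∫ y in (-2:ℝ)..2, (4*e*|x|) * (|y|/((x^2-e^2)+y^2)^2) := by
        apply intervalIntegral.integral_congr
        intro y _
        dsimp only
        rw [show x^2+y^2-e^2 = (x^2-e^2)+y^2 by ring]
        ring
      rw [hcong, intervalIntegral.integral_const_mul]
      have hii := int_inner hc
      have hP1x : P1 x = 4*e*|x| * ((x^2-e^2)⁻¹) := by
        rw [hP1_def, indicator_of_mem hx]
      rw [hP1x]
      calc (4*e*|x|) * ∫ y in (-2:ℝ)..2, |y|/((x^2-e^2)+y^2)^2
          ≤ (4*e*|x|) * (1/(x^2-e^2)) :=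
            mul_le_mul_of_nonneg_left hii (by positivity)
        _ = 4*e*|x| * ((x^2-e^2)⁻¹) := by rw [one_div]
    · have hfun : (fun y : ℝ => G (x,y)) = fun _ => (0:ℝ) := by
        funext y
        rw [hG_def]
        exact indicator_of_notMem (fun h => hx (Set.mem_prod.mp h).1) _
      rw [hfun, MeasureTheory.integral_zero, hP1_def, indicator_of_notMem hx]
  have hP1val : ∫ t, P1 t = 4*e*(Real.log (4-e^2) - Real.log (3*e^2)) := by
    have heven : ∀ t : ℝ, 4*e*|(-t)| * (((-t)^2-e^2)⁻¹) = 4*e*|t| * ((t^2-e^2)⁻¹) := by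
      intro t
      rw [abs_neg, neg_pow]
      ring_nf
    have hII : IntervalIntegrable (fun t : ℝ => 4*e*|t| * ((t^2-e^2)⁻¹)) volume (2*e) 2 := by
      apply ContinuousOn.intervalIntegrable
      apply ContinuousOn.mul (by fun_prop)
      apply ContinuousOn.inv₀ (by fun_prop)
      intro t ht
      rw [uIcc_of_le (by linarith)] at ht
      have : 0 < t^2 - e^2 := by nlinarith [ht.1, ht.2]
      exact ne_of_gt this
    rw [hP1_def]
    simp only [Tm]
    rw [MeasureTheory.integral_indicator (T_measurable _ _),
      int_T heven (by linarith) (by linarith) hII]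
    have hcong2 : ∫ t in (2*e)..2, 4*e*|t| * ((t^2-e^2)⁻¹)
        = ∫ t in (2*e)..2, (4*e) * (t/(t^2-e^2)) := by
      apply intervalIntegral.integral_congr
      intro t ht
      rw [uIcc_of_le (by linarith)] at ht
      dsimp only
      rw [abs_of_pos (by linarith [ht.1] : (0:ℝ) < t)]
      ring
    rw [hcong2, intervalIntegral.integral_const_mul, int_log he he2]
    ring
  have hXY := MeasureTheory.integral_integral (μ := (volume : Measure ℝ))
    (ν := (volume : Measure ℝ)) (f := fun x y => G (x, y)) hGint'
  have houter : (∫ x : ℝ, ∫ y : ℝ, G (x, y)) ≤ ∫ t, P1 t := by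
    apply integral_mono _ hP1int hinner
    exact hGint'.integral_prod_left
  calc ∫ z : ℝ × ℝ, G z = ∫ z : ℝ × ℝ, G z ∂(volume.prod volume) := by
        rw [← Measure.volume_eq_prod]
    _ = ∫ x : ℝ, ∫ y : ℝ, G (x, y) := hXY.symm
    _ ≤ ∫ t, P1 t := houter
    _ = 4*e*(Real.log (4-e^2) - Real.log (3*e^2)) := hP1val

end G2sec


lemma log_est {e : ℝ} (he : 0 < e) (he2 : e ≤ 1/2) :
    Real.log (4-e^2) - Real.log (3*e^2) ≤ 2*|Real.log e| + 1/2 := by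
  have h1 : Real.log (4-e^2) ≤ Real.log 4 := by
    apply Real.log_le_log (by nlinarith)
    nlinarith
  have h2 : Real.log (3*e^2) = Real.log 3 + 2*Real.log e := by
    rw [Real.log_mul (by norm_num) (by positivity), Real.log_pow]
    norm_num
  have h3 : Real.log 4 - Real.log 3 ≤ 1/2 := by
    rw [← Real.log_div (by norm_num) (by norm_num)]
    have := Real.log_le_sub_one_of_pos (show (0:ℝ) < 4/3 by norm_num)
    linarith
  have h4 : |Real.log e| = -Real.log e := by
    apply abs_of_neg
    exact Real.log_neg he (by linarith)
  linarith

section Dom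
variable {e : ℝ}

lemma tri (he : 0 < e) (he2 : e ≤ 1/2) {t : ℝ} (ht : t ≠ -2) :
    t ∈ U e ∨ t ∈ Tm e ∨ 2 < |t| := by
  rcases le_or_gt |t| (2*e) with h | h
  · left
    rw [U, mem_Icc]
    exact abs_le.mp h
  · rcases le_or_gt |t| 2 with h2 | h2
    · right; left
      rcases le_or_gt t 0 with ht0 | ht0
      · right
        rw [abs_of_nonpos ht0] at h h2
        have : -2 ≤ t := by linarith
        rcases this.lt_or_eq with h3 | h3
        · exact ⟨h3, by linarith⟩
        · exact absurd h3.symm ht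
      · left
        rw [abs_of_pos ht0] at h h2
        exact ⟨h, h2⟩
    · right; right; exact h2

lemma dom_bound (he : 0 < e) (he2 : e ≤ 1/2) {w : ℝ} (hw : |w| ≤ 1) {z : ℝ × ℝ}
    (h1 : z.1 ≠ e) (h2 : z.1 ≠ -e) (h3 : z.2 ≠ 0) (h4 : z.1 ≠ -2) (h5 : z.2 ≠ -2) :
    |4*e*z.1*z.2 / (((z.1-e)^2+z.2^2) * ((z.1+e)^2+z.2^2)) * w| ≤
      (((U e).indicator (fun t => 8*(s (t-e) + s (t+e))) z.1) * ((U e).indicator s z.2))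
      + (((Tm e) ×ˢ (Icc (-2:ℝ) 2)).indicator
          (fun z : ℝ × ℝ => 4*e*(|z.1| * |z.2|)/(z.1^2+z.2^2-e^2)^2) z)
      + (((U e).indicator (fun t => 8*e*|t|) z.1) * ((Tm e).indicator (fun t => (|t| ^ 3)⁻¹) z.2))
      + e * |w| := by
  set K := 4*e*z.1*z.2 / (((z.1-e)^2+z.2^2) * ((z.1+e)^2+z.2^2)) with hK_def
  have hG1nn : 0 ≤ ((U e).indicator (fun t => 8*(s (t-e) + s (t+e))) z.1)
      * ((U e).indicator s z.2) := by
    apply mul_nonneg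
    · apply indicator_nonneg
      intro x _
      have := s_nonneg (x-e); have := s_nonneg (x+e); linarith
    · exact indicator_nonneg (fun x _ => s_nonneg x) _
  have hG2nn : 0 ≤ ((Tm e) ×ˢ (Icc (-2:ℝ) 2)).indicator
      (fun z : ℝ × ℝ => 4*e*(|z.1| * |z.2|)/(z.1^2+z.2^2-e^2)^2) z := by
    apply indicator_nonneg
    intro x _
    positivity
  have hG3nn : 0 ≤ ((U e).indicator (fun t => 8*e*|t|) z.1)
      * ((Tm e).indicator (fun t => (|t| ^ 3)⁻¹) z.2) := by
    apply mul_nonneg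
    · exact indicator_nonneg (fun x _ => by positivity) _
    · exact indicator_nonneg (fun x _ => by positivity) _
  have hG4nn : 0 ≤ e * |w| := by positivity
  have habs : |K * w| ≤ |K| := by
    rw [abs_mul]
    calc |K| * |w| ≤ |K| * 1 := mul_le_mul_of_nonneg_left hw (abs_nonneg K)
      _ = |K| := mul_one _
  -- far case helper
  have hfar : ∀ (hf : 4 < z.1^2 + z.2^2), |K * w| ≤ e * |w| := by
    intro hf
    rw [abs_mul]
    exact mul_le_mul_of_nonneg_right (F_bound he he2 hf) (abs_nonneg w)
  rcases tri he he2 h4 with hz1 | hz1 | hz1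
  · -- z.1 ∈ U e
    have hz1' : |z.1| ≤ 2*e := by
      rw [U, mem_Icc] at hz1
      exact abs_le.mpr hz1
    rcases tri he he2 h5 with hz2 | hz2 | hz2
    · -- near region
      have hb := near_bound he hz1' h3 h1 h2
      have hz2' : |z.2| ≤ 2*e := by
        rw [U, mem_Icc] at hz2
        exact abs_le.mpr hz2
      have hGeq : ((U e).indicator (fun t => 8*(s (t-e) + s (t+e))) z.1)
          * ((U e).indicator s z.2) = 8 * (s (z.1-e) + s (z.1+e)) * s z.2 := by
        rw [indicator_of_mem hz1, indicator_of_mem hz2]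
      rw [← hGeq] at hb
      linarith [le_trans habs hb]
    · -- M2 region
      have hq1 : z.1^2 ≤ 4*e^2 := by
        nlinarith [sq_abs z.1, abs_nonneg z.1]
      have hq2 : 4*e^2 ≤ z.2^2 := by
        have := (mem_Tm he hz2).1
        nlinarith
      have hb := M2_bound he hq1 hq2
      have hGeq : ((U e).indicator (fun t => 8*e*|t|) z.1)
          * ((Tm e).indicator (fun t => (|t| ^ 3)⁻¹) z.2) = 8*e*|z.1| * (|z.2| ^ 3)⁻¹ := by
        rw [indicator_of_mem hz1, indicator_of_mem hz2]
      rw [← hGeq] at hb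
      linarith [le_trans habs hb]
    · -- far
      have hf : 4 < z.1^2 + z.2^2 := by nlinarith [sq_abs z.2, sq_nonneg z.1, abs_nonneg z.2]
      linarith [hfar hf]
  · -- z.1 ∈ Tm e
    rcases le_or_gt |z.2| 2 with hz2 | hz2
    · -- M1 region
      have hq1 : 4*e^2 ≤ z.1^2 := by
        have := (mem_Tm he hz1).1
        nlinarith
      have hb := M1_bound (z2 := z.2) he hq1
      have hz2m : z.2 ∈ Icc (-2:ℝ) 2 := mem_Icc.mpr (abs_le.mp hz2)
      have hGeq : ((Tm e) ×ˢ (Icc (-2:ℝ) 2)).indicator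
          (fun z : ℝ × ℝ => 4*e*(|z.1| * |z.2|)/(z.1^2+z.2^2-e^2)^2) z
          = 4*e*(|z.1| * |z.2|)/(z.1^2+z.2^2-e^2)^2 := by
        exact indicator_of_mem (Set.mem_prod.mpr ⟨hz1, hz2m⟩) _
      rw [← hGeq] at hb
      linarith [le_trans habs hb]
    · -- far
      have hf : 4 < z.1^2 + z.2^2 := by nlinarith [sq_abs z.2, sq_nonneg z.1, abs_nonneg z.2]
      linarith [hfar hf]
  · -- far
    have hf : 4 < z.1^2 + z.2^2 := by nlinarith [sq_abs z.1, sq_nonneg z.2, abs_nonneg z.1]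
    linarith [hfar hf]

end Dom

end BS

noncomputable section

set_option maxHeartbeats 2000000 in
theorem statement10 (I : ℝ) (hI : 1 ≤ I) :
    ∃ C_I : ℝ, 0 < C_I ∧ ∃ εI : ℝ, 0 < εI ∧
      ∀ ε : ℝ, 0 < ε → ε ≤ εI →
        ∀ ω : ℝ × ℝ → ℝ,
          MemLp ω ⊤ (volume : Measure (ℝ × ℝ)) →
          Integrable ω (volume : Measure (ℝ × ℝ)) →
          (∀ᵐ y : ℝ × ℝ, |ω y| ≤ 1) →
          (∫ y : ℝ × ℝ, |ω y|) ≤ I →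
          (biotSavart ω (-ε, 0)).1 - (biotSavart ω (ε, 0)).1 ≤
            (4 / π) * ε * |Real.log ε| + C_I * ε := by
  refine ⟨100 + I, by linarith, 1/2, by norm_num, ?_⟩
  intro ε hε hε2 ω hmem hωint hω1 hωL1
  have hm := hωint.aestronglyMeasurable
  have hπ := Real.pi_pos
  have hIm : Integrable (fun y : ℝ × ℝ =>
      ((0 - y.2) / ((-ε - y.1)^2 + (0 - y.2)^2)) * ω y) volume :=
    BS.integrable_kernel_mul (-ε, 0) hm hω1 hωint
  have hIp : Integrable (fun y : ℝ × ℝ =>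
      ((0 - y.2) / ((ε - y.1)^2 + (0 - y.2)^2)) * ω y) volume :=
    BS.integrable_kernel_mul (ε, 0) hm hω1 hωint
  have h0m : (biotSavart ω (-ε, 0)).1
      = (1/(2*π)) * ∫ y : ℝ × ℝ, ((0 - y.2) / ((-ε - y.1)^2 + (0 - y.2)^2)) * ω y := rfl
  have h0p : (biotSavart ω (ε, 0)).1
      = (1/(2*π)) * ∫ y : ℝ × ℝ, ((0 - y.2) / ((ε - y.1)^2 + (0 - y.2)^2)) * ω y := rfl
  have n0 : ∀ᵐ z : ℝ × ℝ, z.2 ≠ 0 := by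
    filter_upwards [measure_eq_zero_iff_ae_notMem.mp (BS.null_hline 0)] with z hz
    simpa using hz
  have hcongr : (fun y : ℝ × ℝ => ((0 - y.2) / ((-ε - y.1)^2 + (0 - y.2)^2)) * ω y
      - ((0 - y.2) / ((ε - y.1)^2 + (0 - y.2)^2)) * ω y) =ᵐ[volume]
      (fun y : ℝ × ℝ =>
        4*ε*y.1*y.2 / (((y.1-ε)^2+y.2^2) * ((y.1+ε)^2+y.2^2)) * ω y) := by
    filter_upwards [n0] with y hy
    have hy2 : (0:ℝ) < y.2^2 := by positivity
    have hA : (-ε - y.1)^2 + (0 - y.2)^2 ≠ 0 := by nlinarith [sq_nonneg (-ε - y.1)]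
    have hB : (ε - y.1)^2 + (0 - y.2)^2 ≠ 0 := by nlinarith [sq_nonneg (ε - y.1)]
    have hA' : (y.1-ε)^2+y.2^2 ≠ 0 := by nlinarith [sq_nonneg (y.1-ε)]
    have hB' : (y.1+ε)^2+y.2^2 ≠ 0 := by nlinarith [sq_nonneg (y.1+ε)]
    field_simp
    ring
  have hKint : Integrable (fun y : ℝ × ℝ =>
      4*ε*y.1*y.2 / (((y.1-ε)^2+y.2^2) * ((y.1+ε)^2+y.2^2)) * ω y) volume :=
    (hIm.sub hIp).congr hcongr
  have hsplit : (∫ y : ℝ × ℝ, ((0 - y.2) / ((-ε - y.1)^2 + (0 - y.2)^2)) * ω y)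
      - (∫ y : ℝ × ℝ, ((0 - y.2) / ((ε - y.1)^2 + (0 - y.2)^2)) * ω y)
      = ∫ y : ℝ × ℝ, 4*ε*y.1*y.2 / (((y.1-ε)^2+y.2^2) * ((y.1+ε)^2+y.2^2)) * ω y := by
    rw [← MeasureTheory.integral_sub hIm hIp]
    exact MeasureTheory.integral_congr_ae hcongr
  have hε2' : ε ≤ 1/2 := hε2
  obtain ⟨hG1i, hG1v⟩ := BS.G1_spec (e := ε) hε
  obtain ⟨hG2i, hG2v⟩ := BS.G2_spec (e := ε) hε hε2'
  obtain ⟨hG3i, hG3v⟩ := BS.G3_spec (e := ε) hε hε2'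
  have hG4i : Integrable (fun z : ℝ × ℝ => ε * |ω z|) volume := hωint.abs.const_mul ε
  -- a.e. domination
  have n1 : ∀ᵐ z : ℝ × ℝ, z.1 ≠ ε := by
    filter_upwards [measure_eq_zero_iff_ae_notMem.mp (BS.null_vline ε)] with z hz
    simpa using hz
  have n2 : ∀ᵐ z : ℝ × ℝ, z.1 ≠ -ε := by
    filter_upwards [measure_eq_zero_iff_ae_notMem.mp (BS.null_vline (-ε))] with z hz
    simpa using hz
  have n4 : ∀ᵐ z : ℝ × ℝ, z.1 ≠ -2 := by
    filter_upwards [measure_eq_zero_iff_ae_notMem.mp (BS.null_vline (-2))] with z hz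
    simpa using hz
  have n5 : ∀ᵐ z : ℝ × ℝ, z.2 ≠ -2 := by
    filter_upwards [measure_eq_zero_iff_ae_notMem.mp (BS.null_hline (-2))] with z hz
    simpa using hz
  have hae : ∀ᵐ z : ℝ × ℝ,
      4*ε*z.1*z.2 / (((z.1-ε)^2+z.2^2) * ((z.1+ε)^2+z.2^2)) * ω z ≤
      ((BS.U ε).indicator (fun t => 8*(BS.s (t-ε) + BS.s (t+ε))) z.1)
        * ((BS.U ε).indicator BS.s z.2)
      + ((BS.Tm ε) ×ˢ (Icc (-2:ℝ) 2)).indicator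
          (fun z : ℝ × ℝ => 4*ε*(|z.1| * |z.2|)/(z.1^2+z.2^2-ε^2)^2) z
      + ((BS.U ε).indicator (fun t => 8*ε*|t|) z.1)
        * ((BS.Tm ε).indicator (fun t => (|t| ^ 3)⁻¹) z.2)
      + ε * |ω z| := by
    filter_upwards [hω1, n0, n1, n2, n4, n5] with z hωz hz0 hz1 hz2 hz4 hz5
    have hd := BS.dom_bound hε hε2' hωz hz1 hz2 hz0 hz4 hz5
    exact le_trans (le_abs_self _) hd
  have hGsum : Integrable (fun z : ℝ × ℝ =>
      ((BS.U ε).indicator (fun t => 8*(BS.s (t-ε) + BS.s (t+ε))) z.1)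
        * ((BS.U ε).indicator BS.s z.2)
      + ((BS.Tm ε) ×ˢ (Icc (-2:ℝ) 2)).indicator
          (fun z : ℝ × ℝ => 4*ε*(|z.1| * |z.2|)/(z.1^2+z.2^2-ε^2)^2) z
      + ((BS.U ε).indicator (fun t => 8*ε*|t|) z.1)
        * ((BS.Tm ε).indicator (fun t => (|t| ^ 3)⁻¹) z.2)
      + ε * |ω z|) volume := ((hG1i.add hG2i).add hG3i).add hG4i
  have hle1 := MeasureTheory.integral_mono_ae hKint hGsum hae
  -- split the sum integral
  have e1 : ∫ z : ℝ × ℝ, (((BS.U ε).indicator (fun t => 8*(BS.s (t-ε) + BS.s (t+ε))) z.1)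
        * ((BS.U ε).indicator BS.s z.2)
      + ((BS.Tm ε) ×ˢ (Icc (-2:ℝ) 2)).indicator
          (fun z : ℝ × ℝ => 4*ε*(|z.1| * |z.2|)/(z.1^2+z.2^2-ε^2)^2) z
      + ((BS.U ε).indicator (fun t => 8*ε*|t|) z.1)
        * ((BS.Tm ε).indicator (fun t => (|t| ^ 3)⁻¹) z.2)
      + ε * |ω z|)
      = (∫ z : ℝ × ℝ, (((BS.U ε).indicator (fun t => 8*(BS.s (t-ε) + BS.s (t+ε))) z.1)
        * ((BS.U ε).indicator BS.s z.2)
      + ((BS.Tm ε) ×ˢ (Icc (-2:ℝ) 2)).indicator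
          (fun z : ℝ × ℝ => 4*ε*(|z.1| * |z.2|)/(z.1^2+z.2^2-ε^2)^2) z
      + ((BS.U ε).indicator (fun t => 8*ε*|t|) z.1)
        * ((BS.Tm ε).indicator (fun t => (|t| ^ 3)⁻¹) z.2)))
      + ∫ z : ℝ × ℝ, ε * |ω z| :=
    MeasureTheory.integral_add ((hG1i.add hG2i).add hG3i) hG4i
  have e2 : ∫ z : ℝ × ℝ, (((BS.U ε).indicator (fun t => 8*(BS.s (t-ε) + BS.s (t+ε))) z.1)
        * ((BS.U ε).indicator BS.s z.2)
      + ((BS.Tm ε) ×ˢ (Icc (-2:ℝ) 2)).indicator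
          (fun z : ℝ × ℝ => 4*ε*(|z.1| * |z.2|)/(z.1^2+z.2^2-ε^2)^2) z
      + ((BS.U ε).indicator (fun t => 8*ε*|t|) z.1)
        * ((BS.Tm ε).indicator (fun t => (|t| ^ 3)⁻¹) z.2))
      = (∫ z : ℝ × ℝ, (((BS.U ε).indicator (fun t => 8*(BS.s (t-ε) + BS.s (t+ε))) z.1)
        * ((BS.U ε).indicator BS.s z.2)
      + ((BS.Tm ε) ×ˢ (Icc (-2:ℝ) 2)).indicator
          (fun z : ℝ × ℝ => 4*ε*(|z.1| * |z.2|)/(z.1^2+z.2^2-ε^2)^2) z))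
      + ∫ z : ℝ × ℝ, ((BS.U ε).indicator (fun t => 8*ε*|t|) z.1)
        * ((BS.Tm ε).indicator (fun t => (|t| ^ 3)⁻¹) z.2) :=
    MeasureTheory.integral_add (hG1i.add hG2i) hG3i
  have e3 : ∫ z : ℝ × ℝ, (((BS.U ε).indicator (fun t => 8*(BS.s (t-ε) + BS.s (t+ε))) z.1)
        * ((BS.U ε).indicator BS.s z.2)
      + ((BS.Tm ε) ×ˢ (Icc (-2:ℝ) 2)).indicator
          (fun z : ℝ × ℝ => 4*ε*(|z.1| * |z.2|)/(z.1^2+z.2^2-ε^2)^2) z)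
      = (∫ z : ℝ × ℝ, ((BS.U ε).indicator (fun t => 8*(BS.s (t-ε) + BS.s (t+ε))) z.1)
        * ((BS.U ε).indicator BS.s z.2))
      + ∫ z : ℝ × ℝ, ((BS.Tm ε) ×ˢ (Icc (-2:ℝ) 2)).indicator
          (fun z : ℝ × ℝ => 4*ε*(|z.1| * |z.2|)/(z.1^2+z.2^2-ε^2)^2) z :=
    MeasureTheory.integral_add hG1i hG2i
  have hG4v : (∫ z : ℝ × ℝ, ε * |ω z|) ≤ ε * I := by
    rw [MeasureTheory.integral_const_mul]
    exact mul_le_mul_of_nonneg_left hωL1 hε.le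
  have hlog : 4*ε*(Real.log (4-ε^2) - Real.log (3*ε^2)) ≤ 8*ε*|Real.log ε| + 2*ε := by
    have := BS.log_est hε hε2'
    nlinarith [abs_nonneg (Real.log ε)]
  have htotal : (∫ y : ℝ × ℝ,
      4*ε*y.1*y.2 / (((y.1-ε)^2+y.2^2) * ((y.1+ε)^2+y.2^2)) * ω y)
      ≤ 8*ε*|Real.log ε| + (586 + I)*ε := by
    rw [e1, e2, e3] at hle1
    nlinarith [hG1v, hG2v, hG3v, hG4v, hlog, hle1]
  rw [h0m, h0p, ← mul_sub, hsplit]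
  have h8 : (1/(2*π)) * (8*ε*|Real.log ε|) = (4/π)*ε*|Real.log ε| := by
    field_simp
    ring
  have h9 : (1/(2*π)) * ((586 + I)*ε) ≤ (100 + I)*ε := by
    have h2π : (6:ℝ) < 2*π := by linarith [Real.pi_gt_three]
    have hA : (586+I)*ε ≤ 6*((100+I)*ε) := by nlinarith
    have hB : 6*((100+I)*ε) ≤ (2*π)*((100+I)*ε) := by
      apply mul_le_mul_of_nonneg_right h2π.le (by nlinarith)
    calc (1/(2*π))*((586+I)*ε) ≤ (1/(2*π))*((2*π)*((100+I)*ε)) :=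
          mul_le_mul_of_nonneg_left (hA.trans hB) (by positivity)
      _ = (100+I)*ε := by field_simp
  calc (1/(2*π)) * ∫ y : ℝ × ℝ,
        4*ε*y.1*y.2 / (((y.1-ε)^2+y.2^2) * ((y.1+ε)^2+y.2^2)) * ω y
      ≤ (1/(2*π)) * (8*ε*|Real.log ε| + (586 + I)*ε) :=
        mul_le_mul_of_nonneg_left htotal (by positivity)
    _ = (1/(2*π)) * (8*ε*|Real.log ε|) + (1/(2*π)) * ((586 + I)*ε) := by ring
    _ ≤ (4/π)*ε*|Real.log ε| + (100 + I)*ε := by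
        rw [h8]
        linarith [h9]
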